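/- arXiv:cs/0607014 — 2 statements merged into one kernel-verified Lean document; each statement's English description precedes it below -/
import Mathlib

section
/- Let P be a probability measure with countable atom set C, and X_1,...,X_n i.i.d. ~ P. Define the Good-Turing estimator ζ_k = ((k+1)/n)·(number of atoms appearing exactly k+1 times). Then for k ≥ 1, E[ζ_k] = E[g_k^{n-1}((n-1) P({X}))], where g_k^m(y) = C(m,k)(y/m)^k (1 - y/m)^{m-k} and X ~ P. -/
open scoped Classical

open MeasureTheory Finset

open scoped ENNReal

set_option maxHeartbeats 1000000

set_option linter.unusedSectionVars false


lemma binom_meas {Ω : Type*} [MeasurableSpace Ω] [MeasurableSingletonClass Ω]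
    (P : Measure Ω) [IsProbabilityMeasure P] (n m : ℕ) (a : Ω) :
    (Measure.pi fun _ : Fin n => P) {x | (Finset.univ.filter fun i => x i = a).card = m}
      = (n.choose m : ℝ≥0∞) * P {a} ^ m * (1 - P {a}) ^ (n - m) := by
  have hB : ∀ S : Finset (Fin n),
      {x : Fin n → Ω | Finset.univ.filter (fun i => x i = a) = S}
        = Set.pi Set.univ (fun i => if i ∈ S then {a} else {a}ᶜ) := by
    intro S
    ext x
    simp only [Set.mem_setOf_eq, Set.mem_pi, Set.mem_univ, forall_true_left]
    constructor
    · rintro rfl i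
      by_cases h : x i = a <;> simp [h]
    · intro h
      ext i
      specialize h i
      by_cases hi : i ∈ S <;> simp [hi] at h ⊢ <;> simp [h]
  have hmeas : ∀ S : Finset (Fin n),
      MeasurableSet {x : Fin n → Ω | Finset.univ.filter (fun i => x i = a) = S} := by
    intro S
    rw [hB]
    exact MeasurableSet.pi (Set.countable_univ) fun i _ => by
      split_ifs
      · exact measurableSet_singleton a
      · exact (measurableSet_singleton a).compl
  have hset : {x : Fin n → Ω | (Finset.univ.filter fun i => x i = a).card = m}
      = ⋃ S ∈ (Finset.powersetCard m (Finset.univ : Finset (Fin n))),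
          {x : Fin n → Ω | Finset.univ.filter (fun i => x i = a) = S} := by
    ext x
    simp only [Set.mem_setOf_eq, Set.mem_iUnion, Finset.mem_powersetCard]
    constructor
    · intro h
      exact ⟨_, ⟨Finset.filter_subset _ _ |>.trans (Finset.subset_univ _), h⟩, rfl⟩
    · rintro ⟨S, ⟨-, hc⟩, rfl⟩
      exact hc
  rw [hset, measure_biUnion_finset ?disj (fun S _ => hmeas S)]
  case disj =>
    intro S _ T _ hST
    simp only [Function.onFun, Set.disjoint_left]
    intro x hx hx'
    exact hST (hx ▸ hx')
  have hterm : ∀ S ∈ Finset.powersetCard m (Finset.univ : Finset (Fin n)),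
      (Measure.pi fun _ : Fin n => P) {x : Fin n → Ω | Finset.univ.filter (fun i => x i = a) = S}
        = P {a} ^ m * (1 - P {a}) ^ (n - m) := by
    intro S hS
    rw [Finset.mem_powersetCard] at hS
    rw [hB, Measure.pi_pi]
    have : ∀ i : Fin n, P (if i ∈ S then ({a} : Set Ω) else {a}ᶜ)
        = if i ∈ S then P {a} else 1 - P {a} := by
      intro i; split_ifs
      · rfl
      · rw [prob_compl_eq_one_sub (measurableSet_singleton a)]
    simp_rw [this]
    rw [Finset.prod_ite, Finset.prod_const, Finset.prod_const,
      Finset.filter_mem_eq_inter, Finset.univ_inter, hS.2]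
    congr 1
    rw [Finset.filter_not, Finset.filter_mem_eq_inter, Finset.univ_inter,
      ← Finset.compl_eq_univ_sdiff, Finset.card_compl, hS.2, Fintype.card_fin]
  rw [Finset.sum_congr rfl hterm, Finset.sum_const, Finset.card_powersetCard,
    Finset.card_univ, Fintype.card_fin, nsmul_eq_mul, mul_assoc]

section
variable {Ω : Type*} [MeasurableSpace Ω] [MeasurableSingletonClass Ω]
  (P : Measure Ω) [IsProbabilityMeasure P]

lemma atoms_countable : Set.Countable {ω | 0 < P {ω}} := by
  have := Measure.countable_meas_pos_of_disjoint_of_meas_iUnion_ne_top (μ := P)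
    (As := fun ω : Ω => {ω}) (fun ω => measurableSet_singleton ω)
    (fun ω ω' h => by simpa [Set.disjoint_left] using h)
    (by exact ((prob_le_one).trans_lt ENNReal.one_lt_top).ne)
  exact this

lemma rep_tsum (g : Ω → ℝ≥0∞) (hg : ∀ ω, P {ω} = 0 → g ω = 0) (ω : Ω) :
    g ω = ∑' a : {ω | 0 < P {ω}}, Set.indicator {(a : Ω)} (fun _ => g a) ω := by
  by_cases hω : 0 < P {ω}
  · rw [tsum_eq_single (⟨ω, hω⟩ : {ω | 0 < P {ω}})]
    · simp
    · rintro ⟨b, hb⟩ hne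
      rw [Set.indicator_of_notMem]
      simp only [Set.mem_singleton_iff]
      rintro rfl
      exact hne rfl
  · rw [hg ω (by simpa using hω)]
    symm
    refine ENNReal.tsum_eq_zero.2 ?_
    rintro ⟨b, hb⟩
    rw [Set.indicator_of_notMem]
    simp only [Set.mem_singleton_iff]
    rintro rfl
    exact hω hb

lemma rep_measurable (g : Ω → ℝ≥0∞) (hg : ∀ ω, P {ω} = 0 → g ω = 0) :
    Measurable g := by
  have hA : Set.Countable {ω | 0 < P {ω}} := atoms_countable P
  have := hA.to_subtype
  have : g = fun ω => ∑' a : {ω | 0 < P {ω}}, Set.indicator {(a : Ω)} (fun _ => g a) ω :=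
    funext (rep_tsum P g hg)
  rw [this]
  exact Measurable.ennreal_tsum fun a =>
    Measurable.indicator measurable_const (measurableSet_singleton _)

lemma rep_lintegral (g : Ω → ℝ≥0∞) (hg : ∀ ω, P {ω} = 0 → g ω = 0) :
    ∫⁻ ω, g ω ∂P = ∑' a : {ω | 0 < P {ω}}, g a * P {(a : Ω)} := by
  have hA : Set.Countable {ω | 0 < P {ω}} := atoms_countable P
  have := hA.to_subtype
  calc ∫⁻ ω, g ω ∂P
      = ∫⁻ ω, ∑' a : {ω | 0 < P {ω}}, Set.indicator {(a : Ω)} (fun _ => g a) ω ∂P := by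
        simp_rw [← rep_tsum P g hg]
    _ = ∑' a : {ω | 0 < P {ω}}, ∫⁻ ω, Set.indicator {(a : Ω)} (fun _ => g a) ω ∂P :=
        lintegral_tsum fun a => (Measurable.indicator measurable_const
          (measurableSet_singleton _)).aemeasurable
    _ = ∑' a : {ω | 0 < P {ω}}, g a * P {(a : Ω)} := by
        congr 1
        funext a
        rw [lintegral_indicator (measurableSet_singleton _) _, setLIntegral_const]

end
theorem expected_good_turing {Ω : Type*} [MeasurableSpace Ω]
    [MeasurableSingletonClass Ω] (P : Measure Ω) [IsProbabilityMeasure P]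
    (n k : ℕ) (hk : 1 ≤ k) (hn : k + 1 ≤ n) :
    (∫ x : Fin n → Ω,
        ((k : ℝ) + 1) / n *
          (Set.ncard {ω | 0 < P {ω} ∧
            (Finset.univ.filter fun i => x i = ω).card = k + 1} : ℝ)
        ∂(Measure.pi fun _ : Fin n => P)) =
      ∫ ω, ((n - 1).choose k : ℝ) * (((n : ℝ) - 1) * (P {ω}).toReal / ((n : ℝ) - 1)) ^ k *
        (1 - ((n : ℝ) - 1) * (P {ω}).toReal / ((n : ℝ) - 1)) ^ ((n - 1) - k) ∂P := by
  have hA : Set.Countable {ω | 0 < P {ω}} := atoms_countable P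
  have := hA.to_subtype
  have hn2 : 2 ≤ n := le_trans (by omega) hn
  have hn0 : (n : ℝ≥0∞) ≠ 0 := Nat.cast_ne_zero.2 (by omega)
  have hn1R : ((n : ℝ) - 1) ≠ 0 := by
    have : (2:ℝ) ≤ n := by exact_mod_cast hn2
    linarith
  set μ : Measure (Fin n → Ω) := Measure.pi fun _ : Fin n => P with hμ
  set A : Set Ω := {ω | 0 < P {ω}} with hAdef
  set E : Ω → Set (Fin n → Ω) :=
    fun ω => {x | (Finset.univ.filter fun i => x i = ω).card = k + 1} with hE
  -- measurability of count events
  have hcntmeas : ∀ ω : Ω, Measurable fun x : Fin n → Ω =>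
      (Finset.univ.filter fun i => x i = ω).card := by
    intro ω
    have : (fun x : Fin n → Ω => (Finset.univ.filter fun i => x i = ω).card)
        = fun x => ∑ i, if x i = ω then 1 else 0 := by
      funext x; rw [Finset.card_filter]
    rw [this]
    refine Finset.measurable_sum _ fun i _ =>
      Measurable.ite ?_ measurable_const measurable_const
    exact (measurable_pi_apply (X := fun _ : Fin n => Ω) i) (measurableSet_singleton ω)
  have hEmeas : ∀ ω : Ω, MeasurableSet (E ω) := fun ω =>
    (hcntmeas ω) (measurableSet_singleton (k + 1))
  set h : (Fin n → Ω) → ℝ≥0∞ :=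
    fun x => ∑' a : A, (E (a : Ω)).indicator (1 : (Fin n → Ω) → ℝ≥0∞) x with hh
  have hhmeas : Measurable h :=
    Measurable.ennreal_tsum fun a =>
      Measurable.indicator measurable_const (hEmeas _)
  -- counting identity
  have hcount : ∀ x : Fin n → Ω,
      h x = (Set.ncard {ω | 0 < P {ω} ∧
        (Finset.univ.filter fun i => x i = ω).card = k + 1} : ℝ≥0∞) := by
    intro x
    set S : Set Ω := {ω | 0 < P {ω} ∧
        (Finset.univ.filter fun i => x i = ω).card = k + 1} with hS
    have hfin : S.Finite := by
      refine (Set.finite_range x).subset ?_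
      rintro ω ⟨-, hc⟩
      have : (Finset.univ.filter fun i => x i = ω).Nonempty := by
        rw [← Finset.card_pos, hc]; omega
      obtain ⟨i, hi⟩ := this
      exact ⟨i, (Finset.mem_filter.1 hi).2⟩
    have step1 : h x = ∑' a : A, S.indicator (1 : Ω → ℝ≥0∞) (a : Ω) := by
      refine tsum_congr fun a => ?_
      by_cases hxa : x ∈ E (a : Ω)
      · rw [Set.indicator_of_mem hxa,
          Set.indicator_of_mem (show (a : Ω) ∈ S from ⟨a.2, hxa⟩)]
        rfl
      · rw [Set.indicator_of_notMem hxa, Set.indicator_of_notMem (fun hm => hxa hm.2)]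
    rw [step1, tsum_subtype_eq_of_support_subset (by
      intro ω hω
      have : ω ∈ S := by
        by_contra hc
        exact hω (Set.indicator_of_notMem hc _)
      exact this.1)]
    rw [← tsum_subtype S (1 : Ω → ℝ≥0∞)]
    haveI := hfin.fintype
    rw [tsum_fintype]
    simp [Finset.card_univ]
  set c' : ℝ≥0∞ := (↑(k + 1) : ℝ≥0∞) / n with hc'
  -- LHS
  have hL : (∫ x : Fin n → Ω,
        ((k : ℝ) + 1) / n *
          (Set.ncard {ω | 0 < P {ω} ∧
            (Finset.univ.filter fun i => x i = ω).card = k + 1} : ℝ) ∂μ)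
      = (∑' a : A, c' * μ (E (a : Ω))).toReal := by
    have hnn : ∀ x : Fin n → Ω, 0 ≤ ((k : ℝ) + 1) / n *
        (Set.ncard {ω | 0 < P {ω} ∧
          (Finset.univ.filter fun i => x i = ω).card = k + 1} : ℝ) := by
      intro x
      positivity
    have hmeasR : Measurable fun x : Fin n → Ω => ((k : ℝ) + 1) / n *
        (Set.ncard {ω | 0 < P {ω} ∧
          (Finset.univ.filter fun i => x i = ω).card = k + 1} : ℝ) := by
      have : (fun x : Fin n → Ω => ((k : ℝ) + 1) / n *
          (Set.ncard {ω | 0 < P {ω} ∧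
            (Finset.univ.filter fun i => x i = ω).card = k + 1} : ℝ))
          = fun x => ((k : ℝ) + 1) / n * (h x).toReal := by
        funext x; rw [hcount x]; simp
      rw [this]
      exact (hhmeas.ennreal_toReal).const_mul _
    rw [integral_eq_lintegral_of_nonneg_ae (Filter.Eventually.of_forall hnn)
      hmeasR.aestronglyMeasurable]
    congr 1
    have hof : ∀ x : Fin n → Ω, ENNReal.ofReal (((k : ℝ) + 1) / n *
        (Set.ncard {ω | 0 < P {ω} ∧
          (Finset.univ.filter fun i => x i = ω).card = k + 1} : ℝ)) = c' * h x := by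
      intro x
      rw [ENNReal.ofReal_mul (by positivity), hcount x]
      congr 1
      · rw [show ((k : ℝ) + 1) = ((k + 1 : ℕ) : ℝ) by push_cast; ring,
          ENNReal.ofReal_div_of_pos (by exact_mod_cast Nat.pos_of_ne_zero (by omega)),
          ENNReal.ofReal_natCast, ENNReal.ofReal_natCast]
      · exact ENNReal.ofReal_natCast _
    simp_rw [hof]
    rw [lintegral_const_mul _ hhmeas]
    have hint : ∫⁻ x, h x ∂μ = ∑' a : A, μ (E (a : Ω)) := by
      have h0 := lintegral_tsum (μ := μ)
        (f := fun (a : ↥A) (x : Fin n → Ω) =>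
          (E (a : Ω)).indicator (1 : (Fin n → Ω) → ℝ≥0∞) x)
        (fun a => (Measurable.indicator measurable_const (hEmeas _)).aemeasurable)
      simp only [hh]
      rw [h0]
      exact tsum_congr fun a => lintegral_indicator_one (hEmeas _)
    rw [hint, ENNReal.tsum_mul_left]
  -- RHS
  set m : ℕ := (n - 1) - k with hm
  set C : ℕ := (n - 1).choose k with hC
  set g : Ω → ℝ≥0∞ := fun ω => (C : ℝ≥0∞) * P {ω} ^ k * (1 - P {ω}) ^ m with hgdef
  have hg0 : ∀ ω, P {ω} = 0 → g ω = 0 := by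
    intro ω hω
    simp [hgdef, hω, zero_pow (by omega : k ≠ 0)]
  have hPm : Measurable fun ω => P {ω} := rep_measurable P _ (fun ω h => h)
  have ht1 : ∀ ω : Ω, (P {ω}).toReal ≤ 1 := by
    intro ω
    simpa using ENNReal.toReal_mono ENNReal.one_ne_top prob_le_one
  have hR : (∫ ω, ((n - 1).choose k : ℝ) *
        (((n : ℝ) - 1) * (P {ω}).toReal / ((n : ℝ) - 1)) ^ k *
        (1 - ((n : ℝ) - 1) * (P {ω}).toReal / ((n : ℝ) - 1)) ^ ((n - 1) - k) ∂P)
      = (∑' a : A, g (a : Ω) * P {(a : Ω)}).toReal := by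
    have hsimp : ∀ ω : Ω, ((n - 1).choose k : ℝ) *
        (((n : ℝ) - 1) * (P {ω}).toReal / ((n : ℝ) - 1)) ^ k *
        (1 - ((n : ℝ) - 1) * (P {ω}).toReal / ((n : ℝ) - 1)) ^ ((n - 1) - k)
        = (C : ℝ) * (P {ω}).toReal ^ k * (1 - (P {ω}).toReal) ^ m := by
      intro ω
      simp only [mul_div_cancel_left₀ _ hn1R]
      rfl
    simp_rw [hsimp]
    have hnn : ∀ ω : Ω, 0 ≤ (C : ℝ) * (P {ω}).toReal ^ k * (1 - (P {ω}).toReal) ^ m := by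
      intro ω
      have h2 : (0:ℝ) ≤ 1 - (P {ω}).toReal := by linarith [ht1 ω]
      exact mul_nonneg (by positivity) (pow_nonneg h2 m)
    have hmeasR : Measurable fun ω : Ω =>
        (C : ℝ) * (P {ω}).toReal ^ k * (1 - (P {ω}).toReal) ^ m := by
      exact ((hPm.ennreal_toReal.pow_const k).const_mul _).mul
        ((measurable_const.sub hPm.ennreal_toReal).pow_const m)
    rw [integral_eq_lintegral_of_nonneg_ae (Filter.Eventually.of_forall hnn)
      hmeasR.aestronglyMeasurable]
    congr 1
    have hof : ∀ ω : Ω, ENNReal.ofReal ((C : ℝ) * (P {ω}).toReal ^ k *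
        (1 - (P {ω}).toReal) ^ m) = g ω := by
      intro ω
      have h1 : (0:ℝ) ≤ (P {ω}).toReal := ENNReal.toReal_nonneg
      rw [ENNReal.ofReal_mul (by positivity), ENNReal.ofReal_mul (by positivity),
        ENNReal.ofReal_natCast, ENNReal.ofReal_pow h1, ENNReal.ofReal_pow (by linarith [ht1 ω]),
        ENNReal.ofReal_toReal (measure_ne_top P _), ENNReal.ofReal_sub _ h1,
        ENNReal.ofReal_one, ENNReal.ofReal_toReal (measure_ne_top P _)]
    simp_rw [hof]
    exact rep_lintegral P g hg0
  rw [hL, hR]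
  congr 1
  refine tsum_congr fun a => ?_
  rw [hμ, binom_meas P n (k + 1) (a : Ω)]
  have hnat : (k + 1) * n.choose (k + 1) = n * C := by
    have h1 := Nat.add_one_mul_choose_eq (n - 1) k
    have h2 : n - 1 + 1 = n := by omega
    simp only [Nat.succ_eq_add_one, h2] at h1
    rw [hC, h1, mul_comm]
  have hcC : c' * (n.choose (k + 1) : ℝ≥0∞) = (C : ℝ≥0∞) := by
    rw [hc', div_eq_mul_inv, mul_right_comm, ← div_eq_mul_inv, ← Nat.cast_mul, hnat,
      Nat.cast_mul, mul_comm ((n : ℝ≥0∞)) _, mul_div_assoc,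
      ENNReal.div_self hn0 (ENNReal.natCast_ne_top n), mul_one]
  have hmm : n - (k + 1) = m := by omega
  calc c' * ((n.choose (k + 1) : ℝ≥0∞) * P {(a : Ω)} ^ (k + 1) * (1 - P {(a : Ω)}) ^ (n - (k + 1)))
      = (c' * (n.choose (k + 1) : ℝ≥0∞)) * (P {(a : Ω)} ^ k * (1 - P {(a : Ω)}) ^ m * P {(a : Ω)}) := by
        rw [hmm, pow_succ]; ring
    _ = g (a : Ω) * P {(a : Ω)} := by rw [hcC, hgdef]; ring
end

section
/- Let Y_n be nonnegative random variables with Y_n → Y almost surely, and fix a nonnegative integer k. Then E[g_k^n(Y_n)] → E[y↦ Y^k e^{−Y}/k!] as n → ∞, where g_k^n(y) = C(n,k)(y/n)^k (1 − y/n)^{n−k} for 0 ≤ y ≤ n (and the event Y_n > n has vanishing contribution since Y_n → Y a.s.). -/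
open Filter MeasureTheory

private lemma binom_nonneg (n k : ℕ) {y : ℝ} (h0 : 0 ≤ y) (h1 : y ≤ n) :
    0 ≤ (n.choose k : ℝ) * (y / n) ^ k * (1 - y / n) ^ (n - k) := by
  have hdiv0 : 0 ≤ y / n := div_nonneg h0 (Nat.cast_nonneg n)
  have hdiv1 : y / n ≤ 1 := by
    rcases Nat.eq_zero_or_pos n with h | h
    · subst h; simp only [Nat.cast_zero] at h1; simp [le_antisymm h1 h0]
    · exact div_le_one_of_le₀ h1 (Nat.cast_nonneg n)
  have : 0 ≤ 1 - y / n := by linarith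
  positivity

private lemma binom_le_one (n k : ℕ) {y : ℝ} (h0 : 0 ≤ y) (h1 : y ≤ n) :
    (n.choose k : ℝ) * (y / n) ^ k * (1 - y / n) ^ (n - k) ≤ 1 := by
  set p := y / n with hp
  have hp0 : 0 ≤ p := div_nonneg h0 (Nat.cast_nonneg n)
  have hp1 : p ≤ 1 := by
    rcases Nat.eq_zero_or_pos n with h | h
    · subst h; simp only [Nat.cast_zero] at h1; simp [hp, le_antisymm h1 h0]
    · exact div_le_one_of_le₀ h1 (Nat.cast_nonneg n)
  rcases le_or_gt k n with hk | hk
  · have hsum : (∑ m ∈ Finset.range (n + 1),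
        p ^ m * (1 - p) ^ (n - m) * (n.choose m : ℝ)) = 1 := by
      rw [← add_pow]; norm_num
    calc (n.choose k : ℝ) * p ^ k * (1 - p) ^ (n - k)
        = p ^ k * (1 - p) ^ (n - k) * (n.choose k : ℝ) := by ring
      _ ≤ ∑ m ∈ Finset.range (n + 1), p ^ m * (1 - p) ^ (n - m) * (n.choose m : ℝ) := by
          apply Finset.single_le_sum (f := fun m => p ^ m * (1 - p) ^ (n - m) * (n.choose m : ℝ))
          · intro i _
            have : 0 ≤ 1 - p := by linarith
            positivity
          · exact Finset.mem_range.2 (Nat.lt_succ_of_le hk)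
      _ = 1 := hsum
  · simp [Nat.choose_eq_zero_of_lt hk]

private lemma choose_div_pow_tendsto (k : ℕ) :
    Tendsto (fun n : ℕ => (n.choose k : ℝ) / (n : ℝ) ^ k) atTop
      (nhds (1 / (k.factorial : ℝ))) := by
  have heq : ∀ᶠ n : ℕ in atTop, (∏ i ∈ Finset.range k, (1 - (i : ℝ) / n)) / (k.factorial : ℝ)
      = (n.choose k : ℝ) / (n : ℝ) ^ k := by
    filter_upwards [eventually_ge_atTop k, eventually_ge_atTop 1] with n hk h1
    have hn0 : (n : ℝ) ≠ 0 := Nat.cast_ne_zero.2 (by omega)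
    have hdesc : (n.descFactorial k : ℝ) = (n.choose k : ℝ) * (k.factorial : ℝ) := by
      rw [← Nat.cast_mul, Nat.descFactorial_eq_factorial_mul_choose, mul_comm]
    have hprod : (n.descFactorial k : ℝ) = ∏ i ∈ Finset.range k, ((n : ℝ) - i) := by
      rw [Nat.descFactorial_eq_prod_range, Nat.cast_prod]
      refine Finset.prod_congr rfl fun i hi => ?_
      have : i ≤ n := le_trans (Finset.mem_range.1 hi).le hk
      rw [Nat.cast_sub this]
    have hprod2 : ∏ i ∈ Finset.range k, (1 - (i : ℝ) / n)
        = (∏ i ∈ Finset.range k, ((n : ℝ) - i)) / (n : ℝ) ^ k := by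
      calc ∏ i ∈ Finset.range k, (1 - (i : ℝ) / n)
          = ∏ i ∈ Finset.range k, (((n : ℝ) - i) / n) := by
            refine Finset.prod_congr rfl fun i _ => ?_
            field_simp
        _ = (∏ i ∈ Finset.range k, ((n : ℝ) - i)) / (n : ℝ) ^ k := by
            rw [Finset.prod_div_distrib, Finset.prod_const, Finset.card_range]
    have hchoose : (n.choose k : ℝ) = (∏ i ∈ Finset.range k, ((n : ℝ) - i)) / (k.factorial : ℝ) := by
      rw [eq_div_iff (Nat.cast_ne_zero.2 k.factorial_ne_zero), ← hprod, hdesc]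
    rw [hprod2, hchoose]
    ring
  refine Tendsto.congr' heq ?_
  have hprod_t : Tendsto (fun n : ℕ => ∏ i ∈ Finset.range k, (1 - (i : ℝ) / n)) atTop
      (nhds (∏ _i ∈ Finset.range k, (1 : ℝ))) := by
    refine tendsto_finset_prod _ fun i _ => ?_
    have := tendsto_const_div_atTop_nhds_zero_nat (i : ℝ)
    simpa using tendsto_const_nhds.sub this
  simpa using hprod_t.div_const (k.factorial : ℝ)

private lemma binom_pointwise (k : ℕ) {y : ℝ} (hy : 0 ≤ y) {x : ℕ → ℝ}
    (h0 : ∀ n, 0 ≤ x n) (hconv : Tendsto x atTop (nhds y)) :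
    Tendsto (fun n : ℕ => (n.choose k : ℝ) * (x n / n) ^ k * (1 - x n / n) ^ (n - k)) atTop
      (nhds (y ^ k * Real.exp (-y) / (k.factorial : ℝ))) := by
  have hx0 : Tendsto (fun n : ℕ => x n / n) atTop (nhds 0) := by
    have h1 : Tendsto (fun n : ℕ => ((n : ℝ))⁻¹) atTop (nhds 0) :=
      tendsto_inv_atTop_zero.comp tendsto_natCast_atTop_atTop
    have := hconv.mul h1
    simpa [div_eq_mul_inv] using this
  have hc : Tendsto (fun n : ℕ => 1 - x n / n) atTop (nhds 1) := by
    simpa using (tendsto_const_nhds (x := (1:ℝ))).sub hx0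
  have hev_pos : ∀ᶠ n : ℕ in atTop, 0 < 1 - x n / n :=
    hc.eventually (eventually_gt_nhds one_pos)
  -- n * log (1 - x n / n) → -y by squeeze
  have hupper : ∀ᶠ n : ℕ in atTop, (n : ℝ) * Real.log (1 - x n / n) ≤ -x n := by
    filter_upwards [hev_pos, eventually_ge_atTop 1] with n hpos h1
    have hn0 : (n : ℝ) ≠ 0 := Nat.cast_ne_zero.2 (by omega)
    have hlog := Real.log_le_sub_one_of_pos hpos
    have hn : (0:ℝ) ≤ n := Nat.cast_nonneg n
    calc (n : ℝ) * Real.log (1 - x n / n) ≤ (n : ℝ) * ((1 - x n / n) - 1) :=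
          mul_le_mul_of_nonneg_left hlog hn
      _ = -x n := by field_simp; ring
  have hlower : ∀ᶠ n : ℕ in atTop, -x n / (1 - x n / n) ≤ (n : ℝ) * Real.log (1 - x n / n) := by
    filter_upwards [hev_pos, eventually_ge_atTop 1] with n hpos h1
    have hn0 : (n : ℝ) ≠ 0 := Nat.cast_ne_zero.2 (by omega)
    have hlog := Real.one_sub_inv_le_log_of_pos hpos
    have hn : (0:ℝ) ≤ n := Nat.cast_nonneg n
    have hnpos : (0:ℝ) < n := by exact_mod_cast Nat.pos_of_ne_zero (by omega)
    have hxn : x n < n := (div_lt_one hnpos).1 (by linarith)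
    have hne : (n:ℝ) - x n ≠ 0 := by linarith
    calc -x n / (1 - x n / n) = (n : ℝ) * (1 - (1 - x n / n)⁻¹) := by
          have e1 : (1:ℝ) - x n / n = ((n:ℝ) - x n) / n := by field_simp
          rw [e1, inv_div]
          field_simp
          ring
      _ ≤ (n : ℝ) * Real.log (1 - x n / n) := mul_le_mul_of_nonneg_left hlog hn
  have hlow_t : Tendsto (fun n : ℕ => -x n / (1 - x n / n)) atTop (nhds (-y)) := by
    have := (hconv.neg).div hc one_ne_zero
    rw [div_one] at this; exact this
  have hnlog : Tendsto (fun n : ℕ => (n : ℝ) * Real.log (1 - x n / n)) atTop (nhds (-y)) :=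
    tendsto_of_tendsto_of_tendsto_of_le_of_le' hlow_t hconv.neg hlower hupper
  have hlogc : Tendsto (fun n : ℕ => Real.log (1 - x n / n)) atTop (nhds 0) := by
    have := (Real.continuousAt_log one_ne_zero).tendsto.comp hc
    simpa [Function.comp_def] using this
  have hklog : Tendsto (fun n : ℕ => (k : ℝ) * Real.log (1 - x n / n)) atTop (nhds 0) := by
    simpa using hlogc.const_mul (k : ℝ)
  have hC : Tendsto (fun n : ℕ => (1 - x n / n) ^ (n - k)) atTop (nhds (Real.exp (-y))) := by
    have hexp : Tendsto
        (fun n : ℕ => Real.exp ((n : ℝ) * Real.log (1 - x n / n)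
          - (k : ℝ) * Real.log (1 - x n / n))) atTop (nhds (Real.exp (-y))) := by
      have := (hnlog.sub hklog)
      rw [show -y - 0 = -y by ring] at this
      exact (Real.continuous_exp.tendsto _).comp this
    refine Tendsto.congr' ?_ hexp
    filter_upwards [hev_pos, eventually_ge_atTop k] with n hpos hk
    have hcast : ((n - k : ℕ) : ℝ) = (n : ℝ) - k := by
      rw [Nat.cast_sub hk]
    rw [show (n : ℝ) * Real.log (1 - x n / n) - (k : ℝ) * Real.log (1 - x n / n)
        = ((n - k : ℕ) : ℝ) * Real.log (1 - x n / n) by rw [hcast]; ring,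
      Real.exp_nat_mul, Real.exp_log hpos]
  have hB : Tendsto (fun n : ℕ => (x n) ^ k) atTop (nhds (y ^ k)) := hconv.pow k
  have hA := choose_div_pow_tendsto k
  have hfull := (hA.mul hB).mul hC
  rw [show y ^ k * Real.exp (-y) / (k.factorial : ℝ)
      = 1 / (k.factorial : ℝ) * y ^ k * Real.exp (-y) by ring]
  refine Tendsto.congr' ?_ hfull
  filter_upwards [eventually_ge_atTop 1] with n h1
  have hn0 : (n : ℝ) ≠ 0 := Nat.cast_ne_zero.2 (by omega)
  rw [div_pow]
  field_simp

theorem tendsto_integral_binomial_poisson {Ω : Type*} [MeasurableSpace Ω]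
    (μ : Measure Ω) [IsProbabilityMeasure μ] (k : ℕ)
    (Y : ℕ → Ω → ℝ) (Ylim : Ω → ℝ)
    (hYmeas : ∀ n, Measurable (Y n)) (hYlim_meas : Measurable Ylim)
    (hY_nonneg : ∀ n, ∀ᵐ ω ∂μ, 0 ≤ Y n ω)
    (hY_le : ∀ n : ℕ, ∀ᵐ ω ∂μ, Y n ω ≤ n)
    (hYlim_nonneg : ∀ᵐ ω ∂μ, 0 ≤ Ylim ω)
    (hconv : ∀ᵐ ω ∂μ, Tendsto (fun n => Y n ω) atTop (nhds (Ylim ω))) :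
    Tendsto
      (fun n : ℕ => ∫ ω,
        (n.choose k : ℝ) * (Y n ω / n) ^ k * (1 - Y n ω / n) ^ (n - k) ∂μ)
      atTop
      (nhds (∫ ω, (Ylim ω) ^ k * Real.exp (-(Ylim ω)) / (k.factorial : ℝ) ∂μ)) := by
  refine tendsto_integral_of_dominated_convergence (fun _ => (1 : ℝ)) ?_ ?_ ?_ ?_
  · intro n
    exact ((((hYmeas n).div_const _).pow_const _).const_mul _ |>.mul
      (((hYmeas n).div_const _).const_sub 1 |>.pow_const _)).aestronglyMeasurable
  · exact integrable_const 1
  · intro n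
    filter_upwards [hY_nonneg n, hY_le n] with ω h0 h1
    rw [Real.norm_eq_abs, abs_of_nonneg (binom_nonneg n k h0 h1)]
    exact binom_le_one n k h0 h1
  · filter_upwards [hYlim_nonneg, hconv, ae_all_iff.2 hY_nonneg] with ω hy hc h0
    exact binom_pointwise k hy h0 hc
end
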